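/- Let x be an integer-string (word in {1,...,k}) and let i < j. If the alternation count c_{ij}(x) between letters i and j is even, then for any cyclic rotation x' of x, the alternation count c_{ij}(x') equals c_{ij}(x) or c_{ij}(x) - 1. In particular the cyclic complexity, defined as the least even upper bound of all c_{ij} over all cyclic rotations, satisfies c_cyc(x) ≤ c(x) + 1 and is invariant under cyclic rotation. -/

import Mathlib

/-- Number of alternations (changes of letter) along a word. -/
def altCount : List ℕ → ℕ
  | [] => 0
  | [_] => 0
  | a :: b :: rest => (if a = b then 0 else 1) + altCount (b :: rest)

/-- The individual complexity index `c_{ab}` of a word. -/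
def complexityIdx (w : List ℕ) (a b : ℕ) : ℕ :=
  altCount (w.filter (fun c => c = a ∨ c = b))

/-- The cyclic complexity of a word: the smallest even integer bounding all individual
complexity indices of all cyclic rotations of the word. -/
noncomputable def cycComplexity (x : List ℕ) : ℕ :=
  sInf {e : ℕ | Even e ∧ ∀ i j : ℕ, i ≠ j → ∀ t : ℕ, complexityIdx (x.rotate t) i j ≤ e}

/-- Cyclic alternation count. -/
def altCyc : List ℕ → ℕ
  | [] => 0
  | a :: t => altCount ((a :: t) ++ [a])

lemma altCount_concat (a : ℕ) (l : List ℕ) (c : ℕ) :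
    altCount ((a :: l) ++ [c]) = altCount (a :: l) +
      (if (a :: l).getLast (by simp) = c then 0 else 1) := by
  induction l generalizing a with
  | nil => simp [altCount]; rfl
  | cons b t ih =>
      have h1 : ((a :: b :: t) ++ [c]) = a :: ((b :: t) ++ [c]) := by simp
      rw [h1]
      show (if a = b then 0 else 1) + altCount ((b :: t) ++ [c]) = _
      rw [ih b]
      have h2 : (a :: b :: t).getLast (by simp) = (b :: t).getLast (by simp) := by
        rw [List.getLast_cons (by simp)]
      rw [h2]
      show _ = (if a = b then 0 else 1) + altCount (b :: t) + _
      omega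

lemma altCyc_cons (a : ℕ) (l : List ℕ) :
    altCyc (a :: l) = altCount (a :: l) +
      (if (a :: l).getLast (by simp) = a then 0 else 1) :=
  altCount_concat a l a

lemma altCyc_rotate_one (l : List ℕ) : altCyc (l.rotate 1) = altCyc l := by
  match l with
  | [] => rfl
  | [a] => simp [List.rotate]
  | a :: b :: t =>
      have hr : (a :: b :: t).rotate 1 = (b :: t) ++ [a] := by
        rw [List.rotate_cons_succ]; simp
      rw [hr]
      have hbt : (b :: t) ++ [a] = b :: (t ++ [a]) := by simp
      rw [hbt]
      rw [altCyc_cons b (t ++ [a])]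
      have hlast : (b :: (t ++ [a])).getLast (by simp) = a := by
        rw [List.getLast_cons (by simp)]
        simp [List.getLast_append]
      rw [hlast]
      have h1 : altCount (b :: (t ++ [a])) = altCount ((b :: t) ++ [a]) := by
        rw [show (b :: (t ++ [a])) = (b :: t) ++ [a] by simp]
      rw [h1, altCount_concat b t a]
      rw [altCyc_cons a (b :: t)]
      have h2 : (a :: b :: t).getLast (by simp) = (b :: t).getLast (by simp) := by
        rw [List.getLast_cons (by simp)]
      rw [h2]
      show altCount (b :: t) + _ + _ = (if a = b then 0 else 1) + altCount (b :: t) + _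
      have : (if a = b then (0:ℕ) else 1) = (if b = a then 0 else 1) := by
        simp [eq_comm]
      omega

lemma altCyc_rotate (l : List ℕ) (t : ℕ) : altCyc (l.rotate t) = altCyc l := by
  induction t with
  | zero => simp
  | succ n ih =>
      have : l.rotate (n + 1) = (l.rotate n).rotate 1 := by
        rw [List.rotate_rotate]
      rw [this, altCyc_rotate_one, ih]

lemma altCount_le_altCyc (l : List ℕ) : altCount l ≤ altCyc l ∧ altCyc l ≤ altCount l + 1 := by
  match l with
  | [] => simp [altCyc, altCount]
  | a :: t => rw [altCyc_cons]; split <;> omega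

/-- parity: for a word over two letters, even alternation count iff head = last. -/
lemma even_iff_head_eq_last (a b : ℕ) (hab : a ≠ b) (c : ℕ) (l : List ℕ)
    (h : ∀ x ∈ c :: l, x = a ∨ x = b) :
    (Even (altCount (c :: l)) ↔ c = (c :: l).getLast (by simp)) := by
  induction l generalizing c with
  | nil => simp [altCount]
  | cons d t ih =>
      have hd : ∀ x ∈ d :: t, x = a ∨ x = b := fun x hx => h x (List.mem_cons_of_mem _ hx)
      have hc : c = a ∨ c = b := h c (by simp)
      have hdd : d = a ∨ d = b := h d (by simp)
      have ihd := ih d hd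
      have hlast : (c :: d :: t).getLast (by simp) = (d :: t).getLast (by simp) := by
        rw [List.getLast_cons (by simp)]
      rw [hlast]
      show Even ((if c = d then 0 else 1) + altCount (d :: t)) ↔ _
      by_cases hcd : c = d
      · subst hcd
        simpa using ihd
      · simp only [if_neg hcd]
        have hl : (d :: t).getLast (by simp) = a ∨ (d :: t).getLast (by simp) = b :=
          hd _ (List.getLast_mem _)
        rw [Nat.add_comm, Nat.even_add_one]
        by_cases hdL : d = (d :: t).getLast (by simp)
        · have hm : Even (altCount (d :: t)) := ihd.mpr hdL
          have hcL : ¬ c = (d :: t).getLast (by simp) := fun hh => hcd (hh.trans hdL.symm)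
          simp [hm, hcL]
        · have hm : ¬ Even (altCount (d :: t)) := fun hh => hdL (ihd.mp hh)
          have hcL : c = (d :: t).getLast (by simp) := by
            rcases hc with hc | hc <;> rcases hdd with hdd' | hdd' <;>
              rcases hl with hl | hl <;> omega
          simp [hm, hcL]

lemma filter_rotate (x : List ℕ) (p : ℕ → Bool) (t : ℕ) :
    ∃ s : ℕ, (x.rotate t).filter p = (x.filter p).rotate s := by
  set m := t % x.length with hm
  refine ⟨((x.take m).filter p).length, ?_⟩
  have h1 : x.rotate t = x.drop m ++ x.take m := List.rotate_eq_drop_append_take_mod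
  have h2 : x.filter p = (x.take m).filter p ++ (x.drop m).filter p := by
    rw [← List.filter_append, List.take_append_drop]
  rw [h1, List.filter_append, h2, List.rotate_append_length_eq]

/-- key lemma: complexityIdx of a rotation. -/
lemma complexityIdx_rotate_le (x : List ℕ) (i j t : ℕ) :
    complexityIdx (x.rotate t) i j ≤ complexityIdx x i j + 1 := by
  unfold complexityIdx
  obtain ⟨s, hs⟩ := filter_rotate x (fun c => decide (c = i ∨ c = j)) t
  rw [hs]
  have h1 := (altCount_le_altCyc ((x.filter fun c => decide (c = i ∨ c = j)).rotate s)).1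
  have h2 := (altCount_le_altCyc (x.filter fun c => decide (c = i ∨ c = j))).2
  rw [altCyc_rotate] at h1
  omega

lemma part1 (x : List ℕ) (i j : ℕ) (hij : i ≠ j) (he : Even (complexityIdx x i j))
    (t : ℕ) : complexityIdx (x.rotate t) i j = complexityIdx x i j ∨
      complexityIdx (x.rotate t) i j + 1 = complexityIdx x i j := by
  unfold complexityIdx at he ⊢
  obtain ⟨s, hs⟩ := filter_rotate x (fun c => decide (c = i ∨ c = j)) t
  rw [hs]
  rcases hww : x.filter (fun c => decide (c = i ∨ c = j)) with _ | ⟨a, l⟩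
  · left; simp
  · have hmem : ∀ y ∈ a :: l, y = i ∨ y = j := by
      intro y hy
      have hy2 : y ∈ x.filter (fun c => decide (c = i ∨ c = j)) := by rw [hww]; exact hy
      have := List.of_mem_filter hy2
      simpa using this
    have hhl : a = (a :: l).getLast (by simp) :=
      (even_iff_head_eq_last i j hij a l hmem).mp (hww ▸ he)
    have hcyc : altCyc (a :: l) = altCount (a :: l) := by
      rw [altCyc_cons, if_pos hhl.symm]; omega
    have h1 := (altCount_le_altCyc ((a :: l).rotate s)).1
    have h2 := (altCount_le_altCyc ((a :: l).rotate s)).2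
    rw [altCyc_rotate, hcyc] at h1 h2
    omega

lemma part2 (x : List ℕ) (M : ℕ) (h : ∀ i j : ℕ, i ≠ j → complexityIdx x i j ≤ M) :
    cycComplexity x ≤ M + 1 := by
  unfold cycComplexity
  by_cases hM : Even M
  · have hmem : M ∈ {e : ℕ | Even e ∧ ∀ i j : ℕ, i ≠ j → ∀ t : ℕ,
        complexityIdx (x.rotate t) i j ≤ e} := by
      refine ⟨hM, fun i j hij t => ?_⟩
      by_cases hc : complexityIdx x i j = M
      · rcases part1 x i j hij (hc ▸ hM) t with h1 | h1 <;> omega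
      · have := complexityIdx_rotate_le x i j t
        have := h i j hij
        omega
    exact le_trans (Nat.sInf_le hmem) (by omega)
  · have hmem : M + 1 ∈ {e : ℕ | Even e ∧ ∀ i j : ℕ, i ≠ j → ∀ t : ℕ,
        complexityIdx (x.rotate t) i j ≤ e} := by
      refine ⟨Nat.even_add_one.mpr hM, fun i j hij t => ?_⟩
      have := complexityIdx_rotate_le x i j t
      have := h i j hij
      omega
    exact Nat.sInf_le hmem

lemma rotate_surj (x : List ℕ) (s t : ℕ) :
    ∃ u : ℕ, (x.rotate s).rotate u = x.rotate t := by
  rcases eq_or_ne x [] with rfl | hx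
  · exact ⟨0, by simp⟩
  have hn : 0 < x.length := List.length_pos_iff.mpr hx
  refine ⟨t + (x.length - s % x.length), ?_⟩
  rw [List.rotate_rotate]
  have h1 : s + (t + (x.length - s % x.length)) = x.length * (s / x.length + 1) + t := by
    have h2 := Nat.div_add_mod s x.length
    have h3 : s % x.length < x.length := Nat.mod_lt _ hn
    rw [Nat.mul_add, Nat.mul_one]
    omega
  rw [h1, ← List.rotate_rotate, List.rotate_length_mul]

lemma part3 (x : List ℕ) (s : ℕ) : cycComplexity (x.rotate s) = cycComplexity x := by
  unfold cycComplexity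
  congr 1
  ext e
  simp only [Set.mem_setOf_eq, and_congr_right_iff]
  intro _
  constructor
  · intro h i j hij t
    obtain ⟨u, hu⟩ := rotate_surj x s t
    rw [← hu]
    exact h i j hij u
  · intro h i j hij t
    rw [List.rotate_rotate]
    exact h i j hij _

theorem cyclic_complexity_rotation :
    (∀ (x : List ℕ) (i j : ℕ), i ≠ j → Even (complexityIdx x i j) →
      ∀ t : ℕ, complexityIdx (x.rotate t) i j = complexityIdx x i j ∨
        complexityIdx (x.rotate t) i j + 1 = complexityIdx x i j) ∧
    (∀ (x : List ℕ) (M : ℕ), (∀ i j : ℕ, i ≠ j → complexityIdx x i j ≤ M) →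
      cycComplexity x ≤ M + 1) ∧
    (∀ (x : List ℕ) (t : ℕ), cycComplexity (x.rotate t) = cycComplexity x) := by
  exact ⟨part1, part2, part3⟩
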